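/- arXiv:2201.12748 — 2 statements merged into one kernel-verified Lean document; each statement's English description precedes it below -/
import Mathlib

section
/- Let Ω ⊆ ℝⁿ be a bounded connected open set and A : closure(Ω) → ℂ^(m×m) continuous, with induced multiplication operator M_A on C(closure(Ω))^m. Then λ ∈ ℂ is an eigenvalue of M_A if and only if the compact set Γ_λ = {x ∈ closure(Ω) : det(λI − A(x)) = 0} has nonempty interior. -/
set_option maxHeartbeats 1000000

open Matrix

lemma kernel_select {X : Type*} [TopologicalSpace X] {m k : ℕ}
    (B : X → Matrix (Fin m) (Fin m) ℂ)
    (hB : ∀ i j, Continuous fun x => B x i j)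
    (D : Set X)
    (R C : Fin k ↪ Fin m) (c₀ : Fin m) (hc₀ : ∀ i, C i ≠ c₀)
    (x₀ : X)
    (hdet : ((B x₀).submatrix R C).det ≠ 0)
    (hmax : ∀ y ∈ D, ∀ (R' C' : Fin (k+1) ↪ Fin m), ((B y).submatrix R' C').det = 0) :
    ∃ v : X → Fin m → ℂ, (∀ j, Continuous fun x => v x j) ∧ v x₀ ≠ 0 ∧
      ∀ y ∈ D, (B y).mulVec (v y) = 0 := by
  classical
  set C' : Fin (k+1) → Fin m := Fin.snoc (⇑C) c₀ with hC'
  have hC'last : C' (Fin.last k) = c₀ := Fin.snoc_last _ _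
  have hC'cast : ∀ i : Fin k, C' i.castSucc = C i := fun i => Fin.snoc_castSucc _ _ _
  have hC'inj : Function.Injective C' := by
    intro a b hab
    induction a using Fin.lastCases with
    | last =>
      induction b using Fin.lastCases with
      | last => rfl
      | cast j => rw [hC'last, hC'cast] at hab; exact absurd hab.symm (hc₀ j)
    | cast i =>
      induction b using Fin.lastCases with
      | last => rw [hC'last, hC'cast] at hab; exact absurd hab (hc₀ i)
      | cast j => rw [hC'cast, hC'cast] at hab; exact congrArg Fin.castSucc (C.injective hab)
  set w : X → Fin (k+1) → ℂ := fun x i =>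
    (-1 : ℂ) ^ (i : ℕ) * ((B x).submatrix (⇑R) (C' ∘ i.succAbove)).det with hw
  set v : X → Fin m → ℂ := fun x j => ∑ i, if C' i = j then w x i else 0 with hv
  have hwcont : ∀ i, Continuous fun x => w x i := by
    intro i
    exact continuous_const.mul
      ((continuous_pi fun a => continuous_pi fun b => hB _ _).matrix_det)
  refine ⟨v, ?_, ?_, ?_⟩
  · intro j
    exact continuous_finset_sum _ fun i _ => by
      by_cases h : C' i = j <;> simp [h, hwcont i, continuous_const]
  · -- v x₀ ≠ 0 : look at coordinate c₀
    intro hzero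
    have h1 : v x₀ c₀ = w x₀ (Fin.last k) := by
      show (∑ i, if C' i = c₀ then w x₀ i else 0) = w x₀ (Fin.last k)
      rw [Finset.sum_eq_single (Fin.last k)]
      · simp [hC'last]
      · intro b _ hb
        have : C' b ≠ c₀ := fun h => hb (hC'inj (h.trans hC'last.symm))
        simp [this]
      · simp
    have h2 : w x₀ (Fin.last k) ≠ 0 := by
      have : (C' ∘ (Fin.last k).succAbove) = ⇑C := by
        funext i
        simp [Fin.succAbove_last, hC'cast]
      rw [hw]
      simp only [this]
      simp only [Fin.val_last]
      exact mul_ne_zero (pow_ne_zero _ (by norm_num)) hdet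
    rw [hzero] at h1
    exact h2 (h1.symm.trans rfl) |>.elim
  · -- kernel property
    intro y hy
    funext r
    have key : ∀ j : Fin (k+1), True := fun _ => trivial
    -- N: the (k+1)×(k+1) matrix with rows R and extra row r
    set N : Matrix (Fin (k+1)) (Fin (k+1)) ℂ :=
      (B y).submatrix (Fin.snoc (⇑R) r) C' with hN
    have hNdet : N.det = 0 := by
      by_cases hr : ∃ i, R i = r
      · obtain ⟨i, hi⟩ := hr
        refine Matrix.det_zero_of_row_eq (i := i.castSucc) (j := Fin.last k) ?_ ?_
        · exact (Fin.castSucc_lt_last i).ne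
        · funext j
          simp [hN, Matrix.submatrix, Fin.snoc_castSucc, Fin.snoc_last, hi]
      · push_neg at hr
        have hinj : Function.Injective (Fin.snoc (⇑R) r : Fin (k+1) → Fin m) := by
          intro a b hab
          induction a using Fin.lastCases with
          | last =>
            induction b using Fin.lastCases with
            | last => rfl
            | cast j =>
              rw [Fin.snoc_last, Fin.snoc_castSucc] at hab
              exact absurd hab.symm (hr j)
          | cast i =>
            induction b using Fin.lastCases with
            | last =>
              rw [Fin.snoc_last, Fin.snoc_castSucc] at hab
              exact absurd hab (hr i)
            | cast j =>
              rw [Fin.snoc_castSucc, Fin.snoc_castSucc] at hab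
              exact congrArg Fin.castSucc (R.injective hab)
        exact hmax y hy ⟨_, hinj⟩ ⟨C', hC'inj⟩
    have expand := Matrix.det_succ_row N (Fin.last k)
    have hrow : ∀ j : Fin (k+1), N (Fin.last k) j = B y r (C' j) := by
      intro j; simp [hN, Matrix.submatrix, Fin.snoc_last]
    have hminor : ∀ j : Fin (k+1),
        N.submatrix (Fin.last k).succAbove j.succAbove
          = (B y).submatrix (⇑R) (C' ∘ j.succAbove) := by
      intro j
      funext a b
      simp [hN, Matrix.submatrix, Fin.succAbove_last, Fin.snoc_castSucc]
    have key2 : ∑ i, B y r (C' i) * w y i = 0 := by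
      have : ∑ i, B y r (C' i) * w y i = (-1 : ℂ) ^ k * N.det := by
        rw [expand, Finset.mul_sum]
        refine Finset.sum_congr rfl fun j _ => ?_
        rw [hrow j, hminor j, hw]
        simp only [Fin.val_last]
        have hs : ((-1:ℂ))^((j:ℕ)) = (-1)^k * (-1)^(k+(j:ℕ)) := by
          rw [← pow_add, show k + (k + (j:ℕ)) = 2*k + (j:ℕ) from by ring, pow_add, pow_mul]
          norm_num
        rw [hs]; ring
      rw [this, hNdet, mul_zero]
    -- now compute mulVec
    have : (B y).mulVec (v y) r = ∑ i, B y r (C' i) * w y i := by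
      rw [Matrix.mulVec, dotProduct]
      show (∑ x : Fin m, B y r x * ∑ i : Fin (k + 1), if C' i = x then w y i else 0)
        = ∑ i, B y r (C' i) * w y i
      simp_rw [Finset.mul_sum]
      rw [Finset.sum_comm]
      simp [mul_ite, Finset.sum_ite_eq]
    rw [Pi.zero_apply, this, key2]

/-- `λ` is an eigenvalue of the multiplication operator `M_A` on `C(closure Ω)^m`
iff the compact set `Γ_λ = {x ∈ closure Ω : det(λI − A(x)) = 0}` has nonempty interior. -/
theorem stmt1 {n m : ℕ} (Ω : Set (EuclideanSpace ℝ (Fin n)))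
    (hΩo : IsOpen Ω) (hΩc : IsConnected Ω) (hΩb : Bornology.IsBounded Ω)
    (A : C(↥(closure Ω), Matrix (Fin m) (Fin m) ℂ)) (lam : ℂ) :
    (∃ f : C(↥(closure Ω), Fin m → ℂ), f ≠ 0 ∧
        ∀ x : ↥(closure Ω), (A x).mulVec (f x) = lam • f x) ↔
      (interior {x : EuclideanSpace ℝ (Fin n) |
        ∃ hx : x ∈ closure Ω,
          (lam • (1 : Matrix (Fin m) (Fin m) ℂ) - A ⟨x, hx⟩).det = 0}).Nonempty := by
  classical
  constructor
  · rintro ⟨f, hf, heig⟩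
    obtain ⟨x₀, hx₀⟩ : ∃ x₀ : ↥(closure Ω), f x₀ ≠ 0 := by
      by_contra h
      push_neg at h
      exact hf (ContinuousMap.ext fun x => h x)
    have hopen : IsOpen {y : ↥(closure Ω) | f y ≠ 0} := by
      have : {y : ↥(closure Ω) | f y ≠ 0} = f ⁻¹' ({0}ᶜ) := rfl
      rw [this]
      exact isClosed_singleton.isOpen_compl.preimage f.continuous
    obtain ⟨ε, hε, hball⟩ := Metric.isOpen_iff.mp hopen x₀ hx₀
    obtain ⟨z, hz⟩ : (Metric.ball (x₀ : EuclideanSpace ℝ (Fin n)) ε ∩ Ω).Nonempty := by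
      exact _root_.mem_closure_iff.mp x₀.2 _ Metric.isOpen_ball (Metric.mem_ball_self hε)
    have hsub : Metric.ball (x₀ : EuclideanSpace ℝ (Fin n)) ε ∩ Ω ⊆
        {x : EuclideanSpace ℝ (Fin n) | ∃ hx : x ∈ closure Ω,
          (lam • (1 : Matrix (Fin m) (Fin m) ℂ) - A ⟨x, hx⟩).det = 0} := by
      rintro x ⟨hxb, hxΩ⟩
      have hxc : x ∈ closure Ω := subset_closure hxΩ
      refine ⟨hxc, ?_⟩
      have hfx : f ⟨x, hxc⟩ ≠ 0 := by
        apply hball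
        rw [Metric.mem_ball, Subtype.dist_eq]
        exact hxb
      rw [← Matrix.exists_mulVec_eq_zero_iff]
      refine ⟨f ⟨x, hxc⟩, hfx, ?_⟩
      rw [Matrix.sub_mulVec, Matrix.smul_mulVec, Matrix.one_mulVec, heig ⟨x, hxc⟩,
        sub_self]
    exact ⟨z, interior_maximal hsub (Metric.isOpen_ball.inter hΩo) hz⟩
  · rintro ⟨x₁, hx₁⟩
    have hx₁Γ := interior_subset hx₁
    obtain ⟨hx₁c, hx₁det⟩ := hx₁Γ
    rcases Nat.eq_zero_or_pos m with hm | hm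
    · subst hm
      rw [Matrix.det_isEmpty] at hx₁det
      exact absurd hx₁det one_ne_zero
    obtain ⟨r, hr, hball⟩ := Metric.isOpen_iff.mp isOpen_interior x₁ hx₁
    set B : ↥(closure Ω) → Matrix (Fin m) (Fin m) ℂ :=
      fun y => lam • (1 : Matrix (Fin m) (Fin m) ℂ) - A y with hB
    have hBc : ∀ i j, Continuous fun y => B y i j :=
      fun i j => (continuous_const.sub A.continuous).matrix_elem i j
    set D : Set ↥(closure Ω) :=
      {y | (y : EuclideanSpace ℝ (Fin n)) ∈ Metric.ball x₁ r} with hD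
    have hDdet : ∀ y ∈ D, (B y).det = 0 := by
      intro y hy
      rw [hD, Set.mem_setOf_eq] at hy
      obtain ⟨h1, h2⟩ := interior_subset (hball hy)
      have : (⟨(y : EuclideanSpace ℝ (Fin n)), h1⟩ : ↥(closure Ω)) = y := Subtype.ext rfl
      rwa [this] at h2
    set K : Set ℕ := {j | j ≤ m ∧ ∃ y ∈ D, ∃ R C : Fin j ↪ Fin m,
      ((B y).submatrix ⇑R ⇑C).det ≠ 0} with hK
    have hx₁D : (⟨x₁, hx₁c⟩ : ↥(closure Ω)) ∈ D := by
      rw [hD, Set.mem_setOf_eq]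
      exact Metric.mem_ball_self hr
    have hK0 : 0 ∈ K := by
      rw [hK, Set.mem_setOf_eq]
      refine ⟨Nat.zero_le m, ⟨x₁, hx₁c⟩, hx₁D, Function.Embedding.ofIsEmpty,
        Function.Embedding.ofIsEmpty, ?_⟩
      rw [Matrix.det_isEmpty]
      exact one_ne_zero
    have hbdd : BddAbove K := ⟨m, fun j hj => hj.1⟩
    obtain ⟨k, hkK, hkmax⟩ : ∃ k, k ∈ K ∧ ∀ j ∈ K, j ≤ k :=
      ⟨sSup K, Nat.sSup_mem ⟨0, hK0⟩ hbdd, fun j hj => le_csSup hbdd hj⟩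
    rw [hK, Set.mem_setOf_eq] at hkK
    obtain ⟨hkm', x₀, hx₀D, R, C, hdet⟩ := hkK
    have hx₀b : dist (x₀ : EuclideanSpace ℝ (Fin n)) x₁ < r := by
      have h := hx₀D
      rw [hD, Set.mem_setOf_eq] at h
      exact Metric.mem_ball.mp h
    have hkm : k < m := by
      rcases lt_or_eq_of_le hkm' with h | h
      · exact h
      · exfalso
        subst h
        have hRb : Function.Bijective ⇑R := Finite.injective_iff_bijective.mp R.injective
        have hCb : Function.Bijective ⇑C := Finite.injective_iff_bijective.mp C.injective
        set e₁ := Equiv.ofBijective _ hRb with he₁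
        set e₂ := Equiv.ofBijective _ hCb with he₂
        have hEq : (B x₀).submatrix ⇑R ⇑C
            = ((B x₀).submatrix ⇑e₂ ⇑e₂).submatrix ⇑(e₁.trans e₂.symm) id := by
          funext i j
          simp [Matrix.submatrix_apply, he₁, he₂, Equiv.ofBijective_apply]
          rw [show C ((Equiv.ofBijective (⇑C) hCb).symm (R i)) = R i from
            Equiv.ofBijective_apply_symm_apply _ hCb _]
        rw [hEq, Matrix.det_permute, Matrix.det_submatrix_equiv_self, hDdet x₀ hx₀D,
          mul_zero] at hdet
        exact hdet rfl
    obtain ⟨c₀, hc₀⟩ : ∃ c₀ : Fin m, ∀ i, C i ≠ c₀ := by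
      by_contra h
      push_neg at h
      have hs : Function.Surjective ⇑C := fun b => by
        obtain ⟨i, hi⟩ := h b; exact ⟨i, hi⟩
      have := Fintype.card_le_of_surjective _ hs
      simp only [Fintype.card_fin] at this
      omega
    have hmax : ∀ y ∈ D, ∀ (R' C' : Fin (k+1) ↪ Fin m),
        ((B y).submatrix ⇑R' ⇑C').det = 0 := by
      intro y hy R' C'
      by_contra h
      have : k + 1 ∈ K := by
        rw [hK, Set.mem_setOf_eq]
        exact ⟨hkm, y, hy, R', C', h⟩
      have := hkmax _ this
      omega
    obtain ⟨v, hvcont, hv0, hvker⟩ :=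
      kernel_select B hBc D R C c₀ hc₀ x₀ hdet hmax
    set ε : ℝ := r - dist (x₀ : EuclideanSpace ℝ (Fin n)) x₁ with hε
    have hεpos : 0 < ε := by
      simp [hε]; linarith [hx₀b]
    set φ : ↥(closure Ω) → ℝ :=
      fun y => max 0 (ε - dist (y : EuclideanSpace ℝ (Fin n)) (x₀ : EuclideanSpace ℝ (Fin n)))
      with hφ
    have hφcont : Continuous φ :=
      continuous_const.max (continuous_const.sub
        (continuous_subtype_val.dist continuous_const))
    refine ⟨⟨fun y => ((φ y : ℂ)) • v y, ?_⟩, ?_, ?_⟩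
    · exact (Complex.continuous_ofReal.comp hφcont).smul (continuous_pi hvcont)
    · intro h0
      have hfx₀ : ((φ x₀ : ℂ)) • v x₀ = 0 := by
        have := congrFun (congrArg DFunLike.coe h0) x₀
        simpa using this
      have hφx₀ : φ x₀ = ε := by
        simp [hφ, le_of_lt hεpos]
      rw [hφx₀] at hfx₀
      rcases smul_eq_zero.mp hfx₀ with h | h
      · exact (Complex.ofReal_ne_zero.mpr (ne_of_gt hεpos)) h
      · exact hv0 h
    · intro y
      simp only [ContinuousMap.coe_mk]
      by_cases hyd : dist (y : EuclideanSpace ℝ (Fin n)) (x₀ : EuclideanSpace ℝ (Fin n)) < ε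
      · have hyD : y ∈ D := by
          rw [hD, Set.mem_setOf_eq]
          have := dist_triangle (y : EuclideanSpace ℝ (Fin n)) (x₀ : EuclideanSpace ℝ (Fin n)) x₁
          refine Metric.mem_ball.mpr ?_
          simp only [hε] at hyd
          linarith [hx₀b]
        have h0 : (B y).mulVec (v y) = 0 := hvker y hyD
        have h1 : (B y).mulVec (((φ y : ℂ)) • v y) = 0 := by
          rw [Matrix.mulVec_smul, h0, smul_zero]
        rw [hB] at h1
        rw [Matrix.sub_mulVec, Matrix.smul_mulVec, Matrix.one_mulVec,
          sub_eq_zero] at h1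
        exact h1.symm
      · have hφy : φ y = 0 := by
          simp only [hφ]
          rw [max_eq_left]
          linarith [not_lt.mp hyd]
        rw [hφy]
        simp
end

section
/- Fix k > 0 and 0 < m₁ < m₂, and for 0 ≤ v < v_r := m₁/(2√k) − 1 (assuming m₁ > 2√k) let u_+(v) = (m₁ + √(m₁² − 4k(1+v)²))/(2k(1+v)). Then u_+ is differentiable with d/dv u_+(v) = −u_+(v)/(1+v) − 2/√(m₁² − 4k(1+v)²) ≤ −u_+(v)/(1+v), and for g(u,v) = −μv − uv + m₂ u²/(1+ku²) with μ > 0 one has, using the nullcline identity m₁ u_+(v) = (1+v)(1+k u_+(v)²), the estimate d/dv [g(u_+(v), v)] ≤ −μ − u_+(v)/(1+v) < 0. -/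
set_option maxHeartbeats 800000 in
/-- Derivative computations for the upper nullcline branch `u_+` of the DDI-hysteresis
model: `u_+' (v) = −u_+(v)/(1+v) − 2/√(m₁²−4k(1+v)²) ≤ −u_+(v)/(1+v)`, and the
derivative of `v ↦ g(u_+(v), v)` is at most `−μ − u_+(v)/(1+v) < 0`. -/
theorem stmt12 (k m₁ m₂ μ v : ℝ) (up : ℝ → ℝ)
    (hk : 0 < k) (hm1 : 2 * Real.sqrt k < m₁) (hm2 : m₁ < m₂) (hμ : 0 < μ)
    (hv0 : 0 ≤ v) (hv : v < m₁ / (2 * Real.sqrt k) - 1)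
    (hup : ∀ w : ℝ, up w =
      (m₁ + Real.sqrt (m₁ ^ 2 - 4 * k * (1 + w) ^ 2)) / (2 * k * (1 + w))) :
    HasDerivAt up
      (-(up v) / (1 + v) - 2 / Real.sqrt (m₁ ^ 2 - 4 * k * (1 + v) ^ 2)) v ∧
    (-(up v) / (1 + v) - 2 / Real.sqrt (m₁ ^ 2 - 4 * k * (1 + v) ^ 2)
      ≤ -(up v) / (1 + v)) ∧
    ∃ d : ℝ,
      HasDerivAt (fun w => -μ * w - up w * w + m₂ * (up w) ^ 2 / (1 + k * (up w) ^ 2)) d v ∧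
      d ≤ -μ - up v / (1 + v) ∧ d < 0 := by
  have hsk : 0 < Real.sqrt k := Real.sqrt_pos.mpr hk
  have hksq : Real.sqrt k ^ 2 = k := Real.sq_sqrt hk.le
  have h1v : 0 < 1 + v := by linarith
  have hm1pos : 0 < m₁ := lt_trans (by positivity) hm1
  have h2skv : 2 * Real.sqrt k * (1 + v) < m₁ := by
    have h := (lt_div_iff₀ (by positivity : (0:ℝ) < 2 * Real.sqrt k)).mp
      (by linarith : 1 + v < m₁ / (2 * Real.sqrt k))
    linarith
  have harg : 0 < m₁ ^ 2 - 4 * k * (1 + v) ^ 2 := by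
    nlinarith [mul_pos (mul_pos (by norm_num : (0:ℝ) < 2) hsk) h1v]
  have hs : 0 < Real.sqrt (m₁ ^ 2 - 4 * k * (1 + v) ^ 2) := Real.sqrt_pos.mpr harg
  set s := Real.sqrt (m₁ ^ 2 - 4 * k * (1 + v) ^ 2) with hsdef
  have hssq : s ^ 2 = m₁ ^ 2 - 4 * k * (1 + v) ^ 2 := Real.sq_sqrt harg.le
  -- derivative of the argument of the sqrt
  have h1w : HasDerivAt (fun w : ℝ => 1 + w) 1 v := (hasDerivAt_id v).const_add 1
  have hargd : HasDerivAt (fun w : ℝ => m₁ ^ 2 - 4 * k * (1 + w) ^ 2)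
      (-(4 * k * (2 * (1 + v) ^ 1 * 1))) v :=
    ((h1w.pow 2).const_mul (4 * k)).const_sub (m₁ ^ 2)
  have hsqrtd : HasDerivAt (fun w : ℝ => Real.sqrt (m₁ ^ 2 - 4 * k * (1 + w) ^ 2))
      (1 / (2 * s) * (-(4 * k * (2 * (1 + v) ^ 1 * 1)))) v :=
    (Real.hasDerivAt_sqrt harg.ne').comp v hargd
  have hnum : HasDerivAt (fun w : ℝ => m₁ + Real.sqrt (m₁ ^ 2 - 4 * k * (1 + w) ^ 2))
      (1 / (2 * s) * (-(4 * k * (2 * (1 + v) ^ 1 * 1)))) v := hsqrtd.const_add m₁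
  have hden : HasDerivAt (fun w : ℝ => 2 * k * (1 + w)) (2 * k * 1) v := h1w.const_mul (2 * k)
  have hdenne : 2 * k * (1 + v) ≠ 0 := by positivity
  have hupfun : up = fun w =>
      (m₁ + Real.sqrt (m₁ ^ 2 - 4 * k * (1 + w) ^ 2)) / (2 * k * (1 + w)) := funext hup
  have hupv : up v = (m₁ + s) / (2 * k * (1 + v)) := hup v
  have hupvpos : 0 < up v := by rw [hupv]; positivity
  have hupD : HasDerivAt up (-(up v) / (1 + v) - 2 / s) v := by
    rw [hupv, hupfun]
    convert hnum.div hden hdenne using 1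
    · rfl
    · rfl
    · rfl
    rw [← hsdef]
    field_simp
    ring
  refine ⟨hupD, sub_le_self _ (by positivity), ?_⟩
  -- third part
  have hr : 1 < m₂ / m₁ := (one_lt_div hm1pos).mpr hm2
  set r := m₂ / m₁ with hrdef
  set D := -(up v) / (1 + v) - 2 / s with hDdef
  set c := (r - 1) * v + r with hcdef
  have hcpos : 0 < c := by rw [hcdef]; nlinarith
  have hF : HasDerivAt (fun w => -μ * w + up w * ((r - 1) * w + r))
      (-μ * 1 + (D * ((r - 1) * v + r) + up v * ((r - 1) * 1))) v :=
    ((hasDerivAt_id v).const_mul (-μ)).add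
      (hupD.mul (((hasDerivAt_id v).const_mul (r - 1)).add_const r))
  -- eventual equality
  have hev1 : ∀ᶠ w in nhds v, 0 < m₁ ^ 2 - 4 * k * (1 + w) ^ 2 := by
    have hc : Continuous fun w : ℝ => m₁ ^ 2 - 4 * k * (1 + w) ^ 2 := by continuity
    exact hc.continuousAt.eventually (eventually_gt_nhds harg)
  have hev2 : ∀ᶠ w in nhds v, 0 < 1 + w := by
    have hc : Continuous fun w : ℝ => 1 + w := by continuity
    exact hc.continuousAt.eventually (eventually_gt_nhds h1v)
  have hGF : (fun w => -μ * w - up w * w + m₂ * (up w) ^ 2 / (1 + k * (up w) ^ 2))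
      =ᶠ[nhds v] (fun w => -μ * w + up w * ((r - 1) * w + r)) := by
    filter_upwards [hev1, hev2] with w hw1 hw2
    have ht : Real.sqrt (m₁ ^ 2 - 4 * k * (1 + w) ^ 2) ^ 2 = m₁ ^ 2 - 4 * k * (1 + w) ^ 2 :=
      Real.sq_sqrt hw1.le
    set t := Real.sqrt (m₁ ^ 2 - 4 * k * (1 + w) ^ 2) with htdef
    have hupw : up w = (m₁ + t) / (2 * k * (1 + w)) := hup w
    have h2kw : (0:ℝ) < 4 * k * (1 + w) := by positivity
    have e1 : up w * (2 * k * (1 + w)) = m₁ + t := by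
      rw [hupw]; field_simp
    have key4 : (4 * k * (1 + w)) * ((1 + w) * (1 + k * up w ^ 2))
        = (4 * k * (1 + w)) * (m₁ * up w) := by
      linear_combination (up w * (2 * k * (1 + w)) - m₁ + t) * e1 + ht
    have key : (1 + w) * (1 + k * up w ^ 2) = m₁ * up w :=
      mul_left_cancel₀ h2kw.ne' key4
    have hdpos : (0:ℝ) < 1 + k * up w ^ 2 := by positivity
    have hq : m₂ * (up w) ^ 2 / (1 + k * (up w) ^ 2) = r * (up w * (1 + w)) := by
      rw [hrdef, show m₂ / m₁ * (up w * (1 + w)) = m₂ * (up w * (1 + w)) / m₁ by ring,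
        div_eq_div_iff hdpos.ne' hm1pos.ne']
      linear_combination (-(m₂ * up w)) * key
    simp only [hq]
    ring
  have hGd : HasDerivAt (fun w => -μ * w - up w * w + m₂ * (up w) ^ 2 / (1 + k * (up w) ^ 2))
      (-μ * 1 + (D * ((r - 1) * v + r) + up v * ((r - 1) * 1))) v :=
    hF.congr_of_eventuallyEq hGF
  have hDle : D ≤ -(up v) / (1 + v) := by
    rw [hDdef]; exact sub_le_self _ (by positivity)
  have h1 : D * c ≤ (-(up v) / (1 + v)) * c := mul_le_mul_of_nonneg_right hDle hcpos.le
  have h2 : -μ * 1 + ((-(up v) / (1 + v)) * c + up v * ((r - 1) * 1))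
      = -μ - up v / (1 + v) := by
    rw [hcdef]; field_simp; ring
  have h3 : 0 < up v / (1 + v) := by positivity
  have hle : -μ * 1 + (D * ((r - 1) * v + r) + up v * ((r - 1) * 1))
      ≤ -μ - up v / (1 + v) := by rw [← hcdef]; linarith
  exact ⟨_, hGd, hle, lt_of_le_of_lt hle (by linarith)⟩
end
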